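/- Let 0 < β < 2 and let v : ℝ → ℝ be a 2π-periodic C³ function, and set u(x) = v(x) + Λ^β v(x) (so u is C¹). If u(x) ≥ 0 for all x, then |∂_x Λ^β v(x)| ≤ 4 · sup_y |∂_x u(y)| for every x ∈ ℝ, i.e. ‖∂_x Λ^β v‖_{L^∞} ≤ 4 ‖∂_x u‖_{L^∞}. -/

import Mathlib

open MeasureTheory Real

/-- The constant `c_σ = Γ(1+σ) cos((1−σ)π/2) / π`. -/
noncomputable def cFrac (σ : ℝ) : ℝ :=
  Real.Gamma (1 + σ) * Real.cos ((1 - σ) * Real.pi / 2) / Real.pi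

/-- The periodized kernel `K_σ(η) = ∑_{k∈ℤ} |η + 2kπ|^{-(1+σ)}`. -/
noncomputable def Kper (σ η : ℝ) : ℝ :=
  ∑' k : ℤ, |η + 2 * (k : ℝ) * Real.pi| ^ (-(1 + σ))

/-- The fractional Laplacian `Λ^σ f` of a `2π`-periodic function, defined by
`Λ^σ f(x) = (c_σ/2) ∫_{-π}^{π} (2f(x) − f(x+η) − f(x−η)) K_σ(η) dη`. -/
noncomputable def fracLap (σ : ℝ) (f : ℝ → ℝ) (x : ℝ) : ℝ :=
  (cFrac σ / 2) *
    ∫ η in (-Real.pi)..Real.pi, (2 * f x - f (x + η) - f (x - η)) * Kper σ η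

noncomputable def Ctail (σ : ℝ) : ℝ := ∑' k : ℤ, |(k : ℝ)| ^ (-(1 + σ))

lemma Kper_nonneg (σ η : ℝ) : 0 ≤ Kper σ η :=
  tsum_nonneg fun _ => Real.rpow_nonneg (abs_nonneg _) _

lemma summable_tail {σ : ℝ} (hσ : 0 < σ) :
    Summable (fun k : ℤ => |(k : ℝ)| ^ (-(1 + σ))) := by
  have := Real.summable_abs_int_rpow (b := 1 + σ) (by linarith)
  simpa using this

lemma Ctail_nonneg {σ : ℝ} : 0 ≤ Ctail σ :=
  tsum_nonneg fun _ => Real.rpow_nonneg (abs_nonneg _) _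

lemma Kper_term_le {σ : ℝ} (hσ : 0 < σ) {η : ℝ} (hη : |η| ≤ π) (k : ℤ) :
    |η + 2 * (k : ℝ) * π| ^ (-(1 + σ)) ≤
      (if k = 0 then |η| ^ (-(1 + σ)) else 0) + |(k : ℝ)| ^ (-(1 + σ)) := by
  rcases eq_or_ne k 0 with rfl | hk
  · rw [if_pos rfl]
    have h1 : |η + 2 * ((0:ℤ) : ℝ) * π| = |η| := by norm_num
    have h0 : |((0:ℤ):ℝ)| ^ (-(1+σ)) = 0 := by
      rw [show |((0:ℤ):ℝ)| = 0 by norm_num,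
        Real.zero_rpow (by intro h; nlinarith : -(1+σ) ≠ 0)]
    rw [h1, h0, add_zero]
  · simp only [if_neg hk]
    have hk1 : (1 : ℝ) ≤ |(k : ℝ)| := by
      have := Int.one_le_abs (by exact_mod_cast hk : k ≠ 0)
      exact_mod_cast (by exact_mod_cast this : (1:ℤ) ≤ |k|)
    have hπ : (3 : ℝ) < π := Real.pi_gt_three
    have habs : |(k : ℝ)| ≤ |η + 2 * (k : ℝ) * π| := by
      have h1 : |2 * (k : ℝ) * π| = 2 * |(k : ℝ)| * π := by
        rw [abs_mul, abs_mul]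
        simp [abs_of_pos Real.pi_pos]
      have h2 : |2 * (k : ℝ) * π| - |η| ≤ |η + 2 * (k : ℝ) * π| := by
        have h3 := abs_sub_abs_le_abs_sub (2 * (k : ℝ) * π) (-η)
        simp only [sub_neg_eq_add, abs_neg] at h3
        have h4 : |2 * (k : ℝ) * π + η| = |η + 2 * (k : ℝ) * π| := by rw [add_comm]
        linarith [h3, h4.le]
      nlinarith [abs_nonneg η]
    have := Real.rpow_le_rpow_of_nonpos (by linarith : (0:ℝ) < |(k:ℝ)|) habs
      (by linarith : -(1 + σ) ≤ 0)
    linarith [this]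

lemma Kper_summable {σ : ℝ} (hσ : 0 < σ) {η : ℝ} (hη : |η| ≤ π) :
    Summable (fun k : ℤ => |η + 2 * (k : ℝ) * π| ^ (-(1 + σ))) := by
  refine Summable.of_nonneg_of_le (fun k => Real.rpow_nonneg (abs_nonneg _) _)
    (Kper_term_le hσ hη) ?_
  exact ((hasSum_ite_eq (0 : ℤ) (|η| ^ (-(1 + σ)))).summable).add (summable_tail hσ)

lemma Kper_le {σ : ℝ} (hσ : 0 < σ) {η : ℝ} (hη : |η| ≤ π) :
    Kper σ η ≤ |η| ^ (-(1 + σ)) + Ctail σ := by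
  have hs : Summable (fun k : ℤ =>
      (if k = 0 then |η| ^ (-(1 + σ)) else 0) + |(k : ℝ)| ^ (-(1 + σ))) :=
    ((hasSum_ite_eq (0 : ℤ) (|η| ^ (-(1 + σ)))).summable).add (summable_tail hσ)
  have h1 : Kper σ η ≤ ∑' k : ℤ,
      ((if k = 0 then |η| ^ (-(1 + σ)) else 0) + |(k : ℝ)| ^ (-(1 + σ))) :=
    Summable.tsum_le_tsum (Kper_term_le hσ hη) (Kper_summable hσ hη) hs
  calc Kper σ η ≤ _ := h1
    _ = |η| ^ (-(1 + σ)) + Ctail σ := by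
        rw [Summable.tsum_add ((hasSum_ite_eq (0 : ℤ) _).summable) (summable_tail hσ),
          (hasSum_ite_eq (0 : ℤ) _).tsum_eq]
        rfl

lemma Kper_eq_toReal {σ : ℝ} (hσ : 0 < σ) {η : ℝ} (hη : |η| ≤ π) :
    Kper σ η = (∑' k : ℤ, ENNReal.ofReal (|η + 2 * (k : ℝ) * π| ^ (-(1 + σ)))).toReal := by
  rw [← ENNReal.ofReal_tsum_of_nonneg (fun k => Real.rpow_nonneg (abs_nonneg _) _)
    (Kper_summable hσ hη)]
  exact (ENNReal.toReal_ofReal (Kper_nonneg σ η)).symm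

lemma Kper_aesm (σ : ℝ) (hσ : 0 < σ) :
    AEStronglyMeasurable (Kper σ) (volume.restrict (Set.uIoc (-π) π)) := by
  have hg : Measurable
      (fun η : ℝ => (∑' k : ℤ, ENNReal.ofReal (|η + 2 * (k : ℝ) * π| ^ (-(1 + σ)))).toReal) := by
    refine Measurable.ennreal_toReal (Measurable.ennreal_tsum fun k => ?_)
    exact ((measurable_id.add_const _).abs.pow_const _).ennreal_ofReal
  refine hg.aestronglyMeasurable.congr ?_
  filter_upwards [ae_restrict_mem measurableSet_uIoc] with η hη
  have hη' : |η| ≤ π := by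
    rw [Set.uIoc_of_le (by linarith [Real.pi_pos] : -π ≤ π)] at hη
    rw [abs_le]; exact ⟨hη.1.le, hη.2⟩
  exact (Kper_eq_toReal hσ hη').symm

lemma secondDiff_bound {f f' f'' : ℝ → ℝ} (hf : ∀ t, HasDerivAt f (f' t) t)
    (hf' : ∀ t, HasDerivAt f' (f'' t) t) {L : ℝ} (hL : ∀ t, |f'' t| ≤ L)
    (x η : ℝ) : |2 * f x - f (x + η) - f (x - η)| ≤ 2 * L * η ^ 2 := by
  have hL0 : 0 ≤ L := le_trans (abs_nonneg _) (hL 0)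
  have lip : ∀ a b : ℝ, |f' b - f' a| ≤ L * |b - a| := by
    intro a b
    have := Convex.norm_image_sub_le_of_norm_deriv_le (s := Set.univ)
      (f := f') (fun t _ => (hf' t).differentiableAt)
      (fun t _ => by simpa [Real.norm_eq_abs, (hf' t).deriv] using hL t)
      convex_univ (Set.mem_univ a) (Set.mem_univ b)
    simpa [Real.norm_eq_abs] using this
  set g : ℝ → ℝ := fun t => f (x + t) + f (x - t) with hgdef
  have hg : ∀ t, HasDerivAt g (f' (x + t) - f' (x - t)) t := by
    intro t
    have h1 : HasDerivAt (fun s : ℝ => f (x + s)) (f' (x + t)) t := by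
      simpa [Function.comp_def] using (hf (x + t)).comp t ((hasDerivAt_id t).const_add x)
    have h2 : HasDerivAt (fun s : ℝ => f (x - s)) (-f' (x - t)) t := by
      have := (hf (x - t)).comp t ((hasDerivAt_id t).neg.const_add x)
      simpa [sub_eq_add_neg, Function.comp_def] using this
    exact (h1.add h2).congr_deriv (by ring)
  have key : ‖g η - g 0‖ ≤ (2 * L * |η|) * ‖η - 0‖ := by
    refine Convex.norm_image_sub_le_of_norm_deriv_le (s := Set.uIcc 0 η)
      (fun t _ => (hg t).differentiableAt) ?_ (convex_uIcc 0 η)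
      Set.left_mem_uIcc Set.right_mem_uIcc
    intro t ht
    have htη : |t| ≤ |η| := by
      rcases Set.mem_uIcc.1 ht with h | h
      · rw [abs_le]; constructor <;> [linarith [neg_abs_le η, abs_nonneg η];
          linarith [le_abs_self η]]
      · rw [abs_le]; constructor <;> [linarith [neg_abs_le η];
          linarith [le_abs_self η, abs_nonneg η]]
    have := lip (x - t) (x + t)
    have habs : |(x + t) - (x - t)| = 2 * |t| := by
      rw [show (x + t) - (x - t) = 2 * t by ring, abs_mul]; norm_num
    rw [Real.norm_eq_abs, (hg t).deriv]
    calc |f' (x + t) - f' (x - t)| ≤ L * (2 * |t|) := by rw [← habs]; exact this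
      _ ≤ 2 * L * |η| := by nlinarith
  have hg0 : g 0 = 2 * f x := by simp [hgdef]; ring
  have : |2 * f x - f (x + η) - f (x - η)| = ‖g η - g 0‖ := by
    rw [Real.norm_eq_abs, hg0, hgdef]
    simp only [abs_sub_comm]
    congr 1; ring
  rw [this]
  calc ‖g η - g 0‖ ≤ (2 * L * |η|) * ‖η - 0‖ := key
    _ = 2 * L * η ^ 2 := by
        rw [sub_zero, Real.norm_eq_abs]
        nlinarith [abs_mul_abs_self η, abs_nonneg η, sq_abs η]

lemma intervalIntegrable_abs_rpow {r : ℝ} (hr : -1 < r) :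
    IntervalIntegrable (fun η : ℝ => |η| ^ r) volume (-π) π := by
  have h0π : IntervalIntegrable (fun η : ℝ => |η| ^ r) volume 0 π := by
    have h := intervalIntegral.intervalIntegrable_rpow' (a := 0) (b := π) hr
    rw [intervalIntegrable_iff, Set.uIoc_of_le Real.pi_pos.le] at h ⊢
    refine h.congr_fun (fun x hx => ?_) measurableSet_Ioc
    rw [abs_of_pos hx.1]
  have hneg : IntervalIntegrable (fun η : ℝ => |η| ^ r) volume (-π) 0 := by
    have := (IntervalIntegrable.iff_comp_neg
      (f := fun η : ℝ => |η| ^ r) (a := π) (b := 0)).1 h0π.symm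
    simpa [abs_neg] using this
  exact hneg.trans h0π

noncomputable def Bfun (σ L : ℝ) (η : ℝ) : ℝ := 2 * L * (|η| ^ (1 - σ) + Ctail σ * η ^ 2)

lemma Bfun_intervalIntegrable {σ : ℝ} (hσ2 : σ < 2) (L : ℝ) :
    IntervalIntegrable (Bfun σ L) volume (-π) π := by
  have h1 : IntervalIntegrable (fun η : ℝ => |η| ^ (1 - σ)) volume (-π) π :=
    intervalIntegrable_abs_rpow (by linarith)
  have h2 : IntervalIntegrable (fun η : ℝ => Ctail σ * η ^ 2) volume (-π) π :=
    (continuous_const.mul (continuous_pow 2)).intervalIntegrable _ _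
  have := (h1.add h2).const_mul (2 * L)
  rw [intervalIntegrable_iff] at this ⊢
  refine this.congr_fun (fun x _ => ?_) measurableSet_uIoc
  simp [Bfun]

lemma integrand_abs_le {σ : ℝ} (hσ0 : 0 < σ) {f f' f'' : ℝ → ℝ}
    (hf : ∀ t, HasDerivAt f (f' t) t) (hf' : ∀ t, HasDerivAt f' (f'' t) t)
    {L : ℝ} (hL : ∀ t, |f'' t| ≤ L) (x : ℝ) {η : ℝ} (hη0 : η ≠ 0) (hη : |η| ≤ π) :
    |(2 * f x - f (x + η) - f (x - η)) * Kper σ η| ≤ Bfun σ L η := by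
  have hL0 : 0 ≤ L := le_trans (abs_nonneg _) (hL 0)
  rw [abs_mul, abs_of_nonneg (Kper_nonneg σ η)]
  have h1 : |2 * f x - f (x + η) - f (x - η)| ≤ 2 * L * η ^ 2 :=
    secondDiff_bound hf hf' hL x η
  have h2 : Kper σ η ≤ |η| ^ (-(1 + σ)) + Ctail σ := Kper_le hσ0 hη
  have h3 : η ^ 2 * |η| ^ (-(1 + σ)) = |η| ^ (1 - σ) := by
    rw [← sq_abs, ← Real.rpow_natCast |η| 2, ← Real.rpow_add (abs_pos.2 hη0)]
    norm_num
    rw [show (2 + (-σ + -1) : ℝ) = 1 - σ by ring]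
  have := mul_le_mul h1 h2 (Kper_nonneg σ η) (by positivity)
  calc |2 * f x - f (x + η) - f (x - η)| * Kper σ η
      ≤ 2 * L * η ^ 2 * (|η| ^ (-(1 + σ)) + Ctail σ) := this
    _ = Bfun σ L η := by rw [Bfun]; rw [mul_add, mul_add, ← mul_assoc]
                         rw [show 2 * L * η ^ 2 * |η| ^ (-(1+σ))
                            = 2 * L * (η ^ 2 * |η| ^ (-(1+σ))) by ring, h3]
                         ring

lemma ae_ne_zero : ∀ᵐ η : ℝ ∂volume, η ≠ 0 := by
  have h : ({0} : Set ℝ) = {η : ℝ | ¬ η ≠ 0} := by ext; simp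
  rw [ae_iff, ← h]
  exact Real.volume_singleton

lemma integrand_continuous {f : ℝ → ℝ} (hc : Continuous f) (y : ℝ) :
    Continuous (fun η : ℝ => 2 * f y - f (y + η) - f (y - η)) := by
  continuity

lemma integrand_aesm {σ : ℝ} (hσ0 : 0 < σ) {f : ℝ → ℝ} (hc : Continuous f) (y : ℝ) :
    AEStronglyMeasurable (fun η : ℝ => (2 * f y - f (y + η) - f (y - η)) * Kper σ η)
      (volume.restrict (Set.uIoc (-π) π)) :=
  ((integrand_continuous hc y).aestronglyMeasurable).mul (Kper_aesm σ hσ0)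

lemma integrand_intervalIntegrable {σ : ℝ} (hσ0 : 0 < σ) (hσ2 : σ < 2)
    {f f' f'' : ℝ → ℝ} (hf : ∀ t, HasDerivAt f (f' t) t)
    (hf' : ∀ t, HasDerivAt f' (f'' t) t) {L : ℝ} (hL : ∀ t, |f'' t| ≤ L) (x : ℝ) :
    IntervalIntegrable (fun η => (2 * f x - f (x + η) - f (x - η)) * Kper σ η)
      volume (-π) π := by
  have hBi := Bfun_intervalIntegrable hσ2 L
  rw [intervalIntegrable_iff] at hBi ⊢
  refine Integrable.mono' hBi
    (integrand_aesm hσ0 (Differentiable.continuous fun t => (hf t).differentiableAt) x) ?_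
  filter_upwards [ae_restrict_mem measurableSet_uIoc, ae_restrict_of_ae ae_ne_zero]
    with η hmem hη0
  have hη : |η| ≤ π := by
    rw [Set.uIoc_of_le (by linarith [Real.pi_pos] : -π ≤ π)] at hmem
    rw [abs_le]; exact ⟨hmem.1.le, hmem.2⟩
  simpa [Real.norm_eq_abs, abs_mul] using integrand_abs_le hσ0 hf hf' hL x hη0 hη

lemma hasDerivAt_fracLap {σ : ℝ} (hσ0 : 0 < σ) (hσ2 : σ < 2)
    {f f' f'' f''' : ℝ → ℝ} (hf : ∀ t, HasDerivAt f (f' t) t)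
    (hf' : ∀ t, HasDerivAt f' (f'' t) t) (hf'' : ∀ t, HasDerivAt f'' (f''' t) t)
    {L2 L3 : ℝ} (hL2 : ∀ t, |f'' t| ≤ L2) (hL3 : ∀ t, |f''' t| ≤ L3) (x : ℝ) :
    HasDerivAt (fracLap σ f) (fracLap σ f' x) x := by
  have hcf : Continuous f := Differentiable.continuous fun t => (hf t).differentiableAt
  have hcf' : Continuous f' := Differentiable.continuous fun t => (hf' t).differentiableAt
  have key := intervalIntegral.hasDerivAt_integral_of_dominated_loc_of_deriv_le
    (F := fun y η => (2 * f y - f (y + η) - f (y - η)) * Kper σ η)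
    (F' := fun y η => (2 * f' y - f' (y + η) - f' (y - η)) * Kper σ η)
    (x₀ := x) (a := -π) (b := π) (μ := volume) (bound := Bfun σ L3)
    (s := Metric.ball x 1) (Metric.ball_mem_nhds x one_pos)
    (Filter.Eventually.of_forall fun y => integrand_aesm hσ0 hcf y)
    (integrand_intervalIntegrable hσ0 hσ2 hf hf' hL2 x)
    (integrand_aesm hσ0 hcf' x)
    ?_ (Bfun_intervalIntegrable hσ2 L3) ?_
  · have h2 := (key.2.const_mul (cFrac σ / 2))
    unfold fracLap
    exact h2
  · filter_upwards [ae_ne_zero] with η hη0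
    intro hmem y _
    have hη : |η| ≤ π := by
      rw [Set.uIoc_of_le (by linarith [Real.pi_pos] : -π ≤ π)] at hmem
      rw [abs_le]; exact ⟨hmem.1.le, hmem.2⟩
    simpa [Real.norm_eq_abs, abs_mul] using integrand_abs_le hσ0 hf' hf'' hL3 y hη0 hη
  · refine Filter.Eventually.of_forall fun η => fun _ y _ => ?_
    have h1 : HasDerivAt (fun y : ℝ => 2 * f y) (2 * f' y) y := (hf y).const_mul 2
    have h2 : HasDerivAt (fun y : ℝ => f (y + η)) (f' (y + η)) y := by
      simpa [Function.comp_def] using (hf (y + η)).comp y ((hasDerivAt_id y).add_const η)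
    have h3 : HasDerivAt (fun y : ℝ => f (y - η)) (f' (y - η)) y := by
      simpa [Function.comp_def] using (hf (y - η)).comp y ((hasDerivAt_id y).sub_const η)
    exact ((h1.sub h2).sub h3).mul_const (Kper σ η)

lemma cFrac_pos {σ : ℝ} (hσ0 : 0 < σ) (hσ2 : σ < 2) : 0 < cFrac σ := by
  unfold cFrac
  have h1 : 0 < Real.Gamma (1 + σ) := Real.Gamma_pos_of_pos (by linarith)
  have h2 : 0 < Real.cos ((1 - σ) * π / 2) := by
    apply Real.cos_pos_of_mem_Ioo
    constructor
    · nlinarith [Real.pi_pos]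
    · nlinarith [Real.pi_pos]
  positivity

lemma fracLap_nonneg_at_max {σ : ℝ} (hσ0 : 0 < σ) (hσ2 : σ < 2) {f : ℝ → ℝ} {x₀ : ℝ}
    (hmax : ∀ y, f y ≤ f x₀) : 0 ≤ fracLap σ f x₀ := by
  unfold fracLap
  have hc := cFrac_pos hσ0 hσ2
  refine mul_nonneg (by linarith) ?_
  refine intervalIntegral.integral_nonneg (by linarith [Real.pi_pos]) fun η _ => ?_
  exact mul_nonneg (by linarith [hmax (x₀ + η), hmax (x₀ - η)]) (Kper_nonneg σ η)

lemma fracLap_nonpos_at_min {σ : ℝ} (hσ0 : 0 < σ) (hσ2 : σ < 2) {f : ℝ → ℝ} {x₁ : ℝ}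
    (hmin : ∀ y, f x₁ ≤ f y) : fracLap σ f x₁ ≤ 0 := by
  have h := fracLap_nonneg_at_max hσ0 hσ2 (f := fun y => -f y) (x₀ := x₁)
    (fun y => by simpa using hmin y)
  have heq : fracLap σ (fun y => -f y) x₁ = -fracLap σ f x₁ := by
    unfold fracLap
    rw [← mul_neg, ← intervalIntegral.integral_neg]
    congr 1
    refine intervalIntegral.integral_congr fun η _ => ?_
    ring
  rw [heq] at h
  linarith

lemma exists_global_max {f : ℝ → ℝ} (hf : Continuous f)
    (hp : Function.Periodic f (2 * π)) : ∃ x₀, ∀ y, f y ≤ f x₀ := by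
  obtain ⟨x₀, _, hx₀⟩ := isCompact_Icc.exists_isMaxOn
    (Set.nonempty_Icc.2 (by positivity : (0:ℝ) ≤ 2 * π)) (hf.continuousOn (s := Set.Icc 0 (2 * π)))
  refine ⟨x₀, fun y => ?_⟩
  obtain ⟨z, hz, hyz⟩ := hp.exists_mem_Ico₀ (by positivity) y
  rw [hyz]
  exact hx₀ ⟨hz.1, hz.2.le⟩

lemma periodic_bound {f : ℝ → ℝ} (hf : Continuous f)
    (hp : Function.Periodic f (2 * π)) : ∃ M, ∀ x, |f x| ≤ M := by
  obtain ⟨x₀, h⟩ := exists_global_max (continuous_abs.comp hf) (hp.comp abs)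
  exact ⟨|f x₀|, h⟩

lemma periodic_deriv {f : ℝ → ℝ} {c : ℝ} (hp : Function.Periodic f c) :
    Function.Periodic (deriv f) c := by
  intro x
  have h1 : (fun y => f (y + c)) = f := funext fun y => hp y
  calc deriv f (x + c) = deriv (fun y => f (y + c)) x := (deriv_comp_add_const f c x).symm
    _ = deriv f x := by rw [h1]

lemma fracLap_bound {σ : ℝ} (hσ0 : 0 < σ) (hσ2 : σ < 2) {f f' f'' : ℝ → ℝ}
    (hf : ∀ t, HasDerivAt f (f' t) t) (hf' : ∀ t, HasDerivAt f' (f'' t) t)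
    {L : ℝ} (hL : ∀ t, |f'' t| ≤ L) :
    ∃ M, ∀ y, |fracLap σ f y| ≤ M := by
  refine ⟨|cFrac σ / 2| * |∫ η in (-π)..π, Bfun σ L η|, fun y => ?_⟩
  unfold fracLap
  rw [abs_mul]
  refine mul_le_mul_of_nonneg_left ?_ (abs_nonneg _)
  have hb : ∀ᵐ η ∂volume.restrict (Set.uIoc (-π) π),
      ‖(2 * f y - f (y + η) - f (y - η)) * Kper σ η‖ ≤ Bfun σ L η := by
    filter_upwards [ae_restrict_mem measurableSet_uIoc, ae_restrict_of_ae ae_ne_zero]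
      with η hmem hη0
    have hη : |η| ≤ π := by
      rw [Set.uIoc_of_le (by linarith [Real.pi_pos] : -π ≤ π)] at hmem
      rw [abs_le]; exact ⟨hmem.1.le, hmem.2⟩
    simpa [Real.norm_eq_abs, abs_mul] using integrand_abs_le hσ0 hf hf' hL y hη0 hη
  exact intervalIntegral.norm_integral_le_abs_of_norm_le hb (Bfun_intervalIntegrable hσ2 L)

theorem stmt3 (β : ℝ) (hβ0 : 0 < β) (hβ2 : β < 2)
    (v : ℝ → ℝ) (hv : ContDiff ℝ 3 v) (hvper : Function.Periodic v (2 * Real.pi))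
    (u : ℝ → ℝ) (hu : ∀ x, u x = v x + fracLap β v x)
    (hupos : ∀ x, 0 ≤ u x) :
    ∀ x, |deriv (fracLap β v) x| ≤ 4 * ⨆ y, |deriv u y| := by
  intro x
  have h3 : Differentiable ℝ v ∧ ContDiff ℝ 2 (deriv v) := by
    rw [show (3 : WithTop ℕ∞) = 2 + 1 from rfl, contDiff_succ_iff_deriv] at hv
    exact ⟨hv.1, hv.2.2⟩
  set v1 := deriv v with hv1def
  have h2 : Differentiable ℝ v1 ∧ ContDiff ℝ 1 (deriv v1) := by
    have := h3.2
    rw [show (2 : WithTop ℕ∞) = 1 + 1 from rfl, contDiff_succ_iff_deriv] at this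
    exact ⟨this.1, this.2.2⟩
  set v2 := deriv v1 with hv2def
  have h1 : Differentiable ℝ v2 ∧ Continuous (deriv v2) := by
    have := h2.2
    rw [contDiff_one_iff_deriv] at this
    exact ⟨this.1, this.2⟩
  set v3 := deriv v2 with hv3def
  have hd0 : ∀ t, HasDerivAt v (v1 t) t := fun t => (h3.1 t).hasDerivAt
  have hd1 : ∀ t, HasDerivAt v1 (v2 t) t := fun t => (h2.1 t).hasDerivAt
  have hd2 : ∀ t, HasDerivAt v2 (v3 t) t := fun t => (h1.1 t).hasDerivAt
  have hp1 : Function.Periodic v1 (2 * π) := periodic_deriv hvper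
  have hp2 : Function.Periodic v2 (2 * π) := periodic_deriv hp1
  have hp3 : Function.Periodic v3 (2 * π) := periodic_deriv hp2
  have hc1 : Continuous v1 := h2.1.continuous
  have hc2 : Continuous v2 := h1.1.continuous
  have hc3 : Continuous v3 := h1.2
  obtain ⟨L2, hL2⟩ := periodic_bound hc2 hp2
  obtain ⟨L3, hL3⟩ := periodic_bound hc3 hp3
  have hder : ∀ y, HasDerivAt (fracLap β v) (fracLap β v1 y) y := fun y =>
    hasDerivAt_fracLap hβ0 hβ2 hd0 hd1 hd2 hL2 hL3 y
  have hud : ∀ y, HasDerivAt u (v1 y + fracLap β v1 y) y := fun y =>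
    (((hd0 y).add (hder y)).congr_of_eventuallyEq
      (Filter.Eventually.of_forall fun z => hu z))
  have hderivu : ∀ y, deriv u y = v1 y + fracLap β v1 y := fun y => (hud y).deriv
  obtain ⟨Mf, hMf⟩ := fracLap_bound hβ0 hβ2 hd1 hd2 hL3
  obtain ⟨L1, hL1⟩ := periodic_bound hc1 hp1
  have hbdd : BddAbove (Set.range fun y => |deriv u y|) := by
    refine ⟨L1 + Mf, ?_⟩
    rintro _ ⟨y, rfl⟩
    show |deriv u y| ≤ L1 + Mf
    rw [hderivu y]
    exact (abs_add_le _ _).trans (add_le_add (hL1 y) (hMf y))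
  set S := ⨆ y, |deriv u y| with hSdef
  have hS : ∀ y, |deriv u y| ≤ S := fun y => le_ciSup hbdd y
  have hS0 : 0 ≤ S := le_trans (abs_nonneg _) (hS 0)
  obtain ⟨x₀, hx₀⟩ := exists_global_max hc1 hp1
  obtain ⟨x₁, hx₁'⟩ := exists_global_max hc1.neg (hp1.comp (fun t => -t))
  have hmin : ∀ y, v1 x₁ ≤ v1 y := fun y => by
    have := hx₁' y
    simpa using this
  have hup : v1 x₀ ≤ S :=
    calc v1 x₀ ≤ v1 x₀ + fracLap β v1 x₀ := by
          linarith [fracLap_nonneg_at_max hβ0 hβ2 hx₀]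
      _ = deriv u x₀ := (hderivu x₀).symm
      _ ≤ |deriv u x₀| := le_abs_self _
      _ ≤ S := hS x₀
  have hlo : -S ≤ v1 x₁ :=
    calc -S ≤ -|deriv u x₁| := neg_le_neg (hS x₁)
      _ ≤ deriv u x₁ := neg_abs_le _
      _ = v1 x₁ + fracLap β v1 x₁ := hderivu x₁
      _ ≤ v1 x₁ := by linarith [fracLap_nonpos_at_min hβ0 hβ2 hmin]
  have hw : ∀ y, |v1 y| ≤ S := fun y =>
    abs_le.2 ⟨le_trans hlo (hmin y), le_trans (hx₀ y) hup⟩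
  have hdfl : deriv (fracLap β v) x = fracLap β v1 x := (hder x).deriv
  rw [hdfl]
  have heq : fracLap β v1 x = deriv u x - v1 x := by rw [hderivu x]; ring
  rw [heq]
  calc |deriv u x - v1 x| ≤ |deriv u x| + |v1 x| := by
        rw [sub_eq_add_neg]
        exact (abs_add_le _ _).trans (by rw [abs_neg])
    _ ≤ S + S := add_le_add (hS x) (hw x)
    _ ≤ 4 * S := by linarith
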